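/- Let k be a Gaussian integer with nonzero imaginary part. Then |16k^3 - 4k|/|k-1| is irrational. -/

import Mathlib

open GaussianInt

theorem abs_ratio_irrational' (k : GaussianInt) (him : k.im ≠ 0) :
    Irrational (‖((16 * k ^ 3 - 4 * k : GaussianInt) : ℂ)‖ /
      ‖((k - 1 : GaussianInt) : ℂ)‖) := by
  set m : GaussianInt := k * (2 * k - 1) with hm
  set w : GaussianInt := m ^ 2 - m with hw
  have hkey : (16 * k ^ 3 - 4 * k) * (k - 1) = 4 * w := by rw [hw, hm]; ring
  set s : ℤ := Zsqrtd.norm w with hs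
  have hs0 : (0 : ℤ) ≤ s := GaussianInt.norm_nonneg w
  -- components of m
  set x : ℤ := m.re with hx
  set y : ℤ := m.im with hy'
  have hyval : y = k.im * (4 * k.re - 1) := by
    rw [hy', hm]; simp [Zsqrtd.re_mul, Zsqrtd.im_mul, Zsqrtd.re_sub, Zsqrtd.im_sub]; ring
  have hy : y ≠ 0 := by
    rw [hyval]
    refine mul_ne_zero him ?_
    omega
  -- s = u^2 + y^2
  have hmw : w = m * (m - 1) := by rw [hw]; ring
  have hsval : s = (x ^ 2 - x + y ^ 2) ^ 2 + y ^ 2 := by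
    rw [hs, hmw, Zsqrtd.norm_mul, Zsqrtd.norm_def, Zsqrtd.norm_def]
    simp only [Zsqrtd.re_sub, Zsqrtd.im_sub, Zsqrtd.re_one, Zsqrtd.im_one, ← hx, ← hy']
    ring
  -- s is not a square
  have hnotsq : ¬ IsSquare s := by
    rintro ⟨c, hc⟩
    have hy2 : 1 ≤ y ^ 2 := by
      have h0 : 0 < y ^ 2 := by positivity
      linarith
    have hxx : (0 : ℤ) ≤ x ^ 2 - x := by
      rcases le_or_gt x 0 with h | h
      · nlinarith
      · nlinarith
    set u : ℤ := x ^ 2 - x + y ^ 2 with hu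
    have hus : y ^ 2 ≤ u := by linarith
    have habs : |c| * |c| = c * c := abs_mul_abs_self c
    rcases le_or_gt |c| u with h | h
    · nlinarith [abs_nonneg c]
    · have h1 : u + 1 ≤ |c| := h
      nlinarith [abs_nonneg c]
  -- denominator nonzero
  have hden : (k - 1 : GaussianInt) ≠ 0 := by
    intro h
    apply him
    have := congrArg Zsqrtd.im h
    simpa using this
  have hD0 : ‖((k - 1 : GaussianInt) : ℂ)‖ ≠ 0 := by
    rw [ne_eq, _root_.norm_eq_zero, GaussianInt.toComplex_eq_zero]
    exact hden
  set B : ℤ := Zsqrtd.norm (k - 1) with hBdef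
  have hBpos : (0 : ℤ) < B := GaussianInt.norm_pos.mpr hden
  have hB2 : (B : ℝ) = ‖((k - 1 : GaussianInt) : ℂ)‖ *
      ‖((k - 1 : GaussianInt) : ℂ)‖ := by
    rw [hBdef, GaussianInt.intCast_real_norm, Complex.normSq_eq_norm_sq]
    ring
  have hws : ‖((w : GaussianInt) : ℂ)‖ = Real.sqrt (s : ℝ) := by
    rw [Complex.norm_def, hs, GaussianInt.intCast_real_norm]
  have key2 : ‖((16 * k ^ 3 - 4 * k : GaussianInt) : ℂ)‖ *
      ‖((k - 1 : GaussianInt) : ℂ)‖ = 4 * Real.sqrt (s : ℝ) := by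
    rw [← norm_mul, ← GaussianInt.toComplex_mul, hkey, GaussianInt.toComplex_mul, norm_mul, hws]
    congr 1
    have : ((4 : GaussianInt) : ℂ) = 4 := map_ofNat GaussianInt.toComplex 4
    rw [this]
    simp
  have hEq : ‖((16 * k ^ 3 - 4 * k : GaussianInt) : ℂ)‖ /
      ‖((k - 1 : GaussianInt) : ℂ)‖ = ((4 / (B : ℚ) : ℚ) : ℝ) * Real.sqrt (s : ℝ) := by
    have hnum : ‖((16 * k ^ 3 - 4 * k : GaussianInt) : ℂ)‖
        = 4 * Real.sqrt (s : ℝ) / ‖((k - 1 : GaussianInt) : ℂ)‖ := by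
      rw [eq_div_iff hD0]; exact key2
    rw [hnum, div_div, ← hB2]
    push_cast
    ring
  rw [hEq]
  have hirr : Irrational (Real.sqrt (s : ℝ)) :=
    (irrational_sqrt_intCast_iff_of_nonneg hs0).mpr hnotsq
  refine hirr.ratCast_mul ?_
  refine div_ne_zero (by norm_num) ?_
  exact_mod_cast hBpos.ne'
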